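/- arXiv:1810.00080 — 6 statements merged into one kernel-verified Lean document; each statement's English description precedes it below -/
import Mathlib

section
/- Let φ ≠ 0, c ∈ ℝ and let x, y, z : I → ℝ be differentiable on an interval I. For the simply isotropic helicoidal surface of ni-type Y₂(u,t) = (x(u)cos(tφ) − y(u)sin(tφ), x(u)sin(tφ) + y(u)cos(tφ), c t), the coefficients of the first fundamental form with respect to ⟨·,·⟩_z satisfy g₁₁g₂₂ − g₁₂² = φ²(x x' + y y')². For the helicoidal surface of i-type Z₂(u,t) = (x(u)cos(tφ), x(u)sin(tφ), z(u) + c t), one has g₁₁g₂₂ − g₁₂² = φ²(x x')². In particular, Y₂ is admissible at u if and only if (x² + y²)'(u) ≠ 0, and Z₂ is admissible at u if and only if x(u)x'(u) ≠ 0. -/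
open Real

/-- The determinant `g₁₁g₂₂ − g₁₂²` of the first fundamental form of a parametrized
surface `X(u,t)` in simply isotropic space, where `⟨u,v⟩_z = u₁v₁ + u₂v₂`. -/
noncomputable def isoGramDet (X : ℝ → ℝ → ℝ × ℝ × ℝ) (u t : ℝ) : ℝ :=
  let Xu := deriv (fun u' => X u' t) u
  let Xt := deriv (fun t' => X u t') t
  (Xu.1 ^ 2 + Xu.2.1 ^ 2) * (Xt.1 ^ 2 + Xt.2.1 ^ 2)
    - (Xu.1 * Xt.1 + Xu.2.1 * Xt.2.1) ^ 2

/-- First fundamental form determinant and admissibility of simply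
isotropic helicoidal surfaces of ni-type and i-type. -/
theorem simplyIsotropic_helicoidal_gramDet_and_admissible
    (φ c : ℝ) (hφ : φ ≠ 0) (I : Set ℝ) (x y z : ℝ → ℝ)
    (hx : ∀ u ∈ I, DifferentiableAt ℝ x u)
    (hy : ∀ u ∈ I, DifferentiableAt ℝ y u)
    (hz : ∀ u ∈ I, DifferentiableAt ℝ z u) :
    ∀ u ∈ I, ∀ t : ℝ,
      (isoGramDet (fun u' t' =>
          (x u' * Real.cos (t' * φ) - y u' * Real.sin (t' * φ),
           x u' * Real.sin (t' * φ) + y u' * Real.cos (t' * φ),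
           c * t')) u t
        = φ ^ 2 * (x u * deriv x u + y u * deriv y u) ^ 2) ∧
      (isoGramDet (fun u' t' =>
          (x u' * Real.cos (t' * φ), x u' * Real.sin (t' * φ), z u' + c * t')) u t
        = φ ^ 2 * (x u * deriv x u) ^ 2) ∧
      (isoGramDet (fun u' t' =>
          (x u' * Real.cos (t' * φ) - y u' * Real.sin (t' * φ),
           x u' * Real.sin (t' * φ) + y u' * Real.cos (t' * φ),
           c * t')) u t ≠ 0
        ↔ deriv (fun u' => x u' ^ 2 + y u' ^ 2) u ≠ 0) ∧
      (isoGramDet (fun u' t' =>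
          (x u' * Real.cos (t' * φ), x u' * Real.sin (t' * φ), z u' + c * t')) u t ≠ 0
        ↔ x u * deriv x u ≠ 0) := by
  intro u hu t
  have hx' := (hx u hu).hasDerivAt
  have hy' := (hy u hu).hasDerivAt
  have hz' := (hz u hu).hasDerivAt
  have hc : HasDerivAt (fun t' : ℝ => t' * φ) φ t := by
    simpa using (hasDerivAt_id t).mul_const φ
  have hcos : HasDerivAt (fun t' => Real.cos (t' * φ)) (-Real.sin (t * φ) * φ) t := hc.cos
  have hsin : HasDerivAt (fun t' => Real.sin (t' * φ)) (Real.cos (t * φ) * φ) t := hc.sin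
  set a := deriv x u with ha
  set b := deriv y u with hb
  set C := Real.cos (t * φ) with hC
  set s := Real.sin (t * φ) with hs
  have hpyth : s ^ 2 + C ^ 2 = 1 := Real.sin_sq_add_cos_sq (t * φ)
  -- derivatives for the ni-type surface Y₂
  have hYu : HasDerivAt (fun u' =>
      (x u' * C - y u' * s, x u' * s + y u' * C, c * t))
      (a * C - b * s, a * s + b * C, 0) u :=
    HasDerivAt.prodMk ((hx'.mul_const _).sub (hy'.mul_const _))
      (HasDerivAt.prodMk ((hx'.mul_const _).add (hy'.mul_const _)) (hasDerivAt_const u (c * t)))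
  have hYt : HasDerivAt (fun t' =>
      (x u * Real.cos (t' * φ) - y u * Real.sin (t' * φ),
       x u * Real.sin (t' * φ) + y u * Real.cos (t' * φ), c * t'))
      (x u * (-s * φ) - y u * (C * φ), x u * (C * φ) + y u * (-s * φ), c) t :=
    HasDerivAt.prodMk ((hcos.const_mul _).sub (hsin.const_mul _))
      (HasDerivAt.prodMk ((hsin.const_mul _).add (hcos.const_mul _))
        (by simpa using (hasDerivAt_id t).const_mul c))
  -- derivatives for the i-type surface Z₂
  have hZu : HasDerivAt (fun u' =>
      (x u' * C, x u' * s, z u' + c * t))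
      (a * C, a * s, deriv z u) u :=
    HasDerivAt.prodMk (hx'.mul_const _) (HasDerivAt.prodMk (hx'.mul_const _) (by simpa using hz'.add_const (c * t)))
  have hZt : HasDerivAt (fun t' =>
      (x u * Real.cos (t' * φ), x u * Real.sin (t' * φ), z u + c * t'))
      (x u * (-s * φ), x u * (C * φ), c) t :=
    HasDerivAt.prodMk (hcos.const_mul _) (HasDerivAt.prodMk (hsin.const_mul _)
      (by simpa using ((hasDerivAt_id t).const_mul c).const_add (z u)))
  have hDY : isoGramDet (fun u' t' =>
      (x u' * Real.cos (t' * φ) - y u' * Real.sin (t' * φ),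
       x u' * Real.sin (t' * φ) + y u' * Real.cos (t' * φ), c * t')) u t
      = φ ^ 2 * (x u * a + y u * b) ^ 2 := by
    unfold isoGramDet
    rw [show (fun u' => (x u' * Real.cos (t * φ) - y u' * Real.sin (t * φ),
        x u' * Real.sin (t * φ) + y u' * Real.cos (t * φ), c * t))
        = (fun u' => (x u' * C - y u' * s, x u' * s + y u' * C, c * t)) from rfl,
      hYu.deriv, hYt.deriv]
    simp only
    linear_combination (φ ^ 2 * (x u * a + y u * b) ^ 2 * (s ^ 2 + C ^ 2 + 1)) * hpyth
  have hDZ : isoGramDet (fun u' t' =>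
      (x u' * Real.cos (t' * φ), x u' * Real.sin (t' * φ), z u' + c * t')) u t
      = φ ^ 2 * (x u * a) ^ 2 := by
    unfold isoGramDet
    rw [show (fun u' => (x u' * Real.cos (t * φ), x u' * Real.sin (t * φ), z u' + c * t))
        = (fun u' => (x u' * C, x u' * s, z u' + c * t)) from rfl,
      hZu.deriv, hZt.deriv]
    simp only
    linear_combination (φ ^ 2 * (x u * a) ^ 2 * (s ^ 2 + C ^ 2 + 1)) * hpyth
  have hsum : deriv (fun u' => x u' ^ 2 + y u' ^ 2) u = 2 * (x u * a + y u * b) := by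
    have : HasDerivAt (fun u' => x u' ^ 2 + y u' ^ 2)
        (2 * x u ^ 1 * a + 2 * y u ^ 1 * b) u := by
      simpa using (hx'.fun_pow 2).fun_add (hy'.fun_pow 2)
    rw [this.deriv]; ring
  refine ⟨hDY, hDZ, ?_, ?_⟩
  · rw [hDY, hsum]
    constructor
    · intro h h2
      apply h
      have : x u * a + y u * b = 0 := by linarith
      rw [this]; ring
    · intro h h2
      apply h
      have : x u * a + y u * b = 0 := by
        have := mul_eq_zero.mp h2
        rcases this with h3 | h3
        · exact absurd (pow_eq_zero_iff two_ne_zero |>.mp h3) hφ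
        · exact pow_eq_zero_iff two_ne_zero |>.mp h3
      rw [this]; ring
  · rw [hDZ]
    constructor
    · intro h h2
      apply h; rw [h2]; ring
    · intro h h2
      apply h
      have := mul_eq_zero.mp h2
      rcases this with h3 | h3
      · exact absurd (pow_eq_zero_iff two_ne_zero |>.mp h3) hφ
      · exact pow_eq_zero_iff two_ne_zero |>.mp h3
end

section
/- Let φ ≠ 0, c ∈ ℝ and let x, y, z : I → ℝ be differentiable on an interval I. For the pseudo-isotropic helicoidal surface of ni-type Yh₂(u,t) = (x(u)cosh(tφ) + y(u)sinh(tφ), x(u)sinh(tφ) + y(u)cosh(tφ), c t), the coefficients of the first fundamental form with respect to ⟨·,·⟩_pz satisfy g₁₁g₂₂ − g₁₂² = −φ²(x x' − y y')². For the helicoidal surface of i-type Zh₂(u,t) = (x(u)cosh(tφ), x(u)sinh(tφ), z(u) + c t), one has g₁₁g₂₂ − g₁₂² = −φ²(x x')². -/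
/-- The determinant `g₁₁g₂₂ − g₁₂²` of the first fundamental form of a parametrized
surface `X(u,t)` in pseudo-isotropic space, where `⟨u,v⟩_pz = u₁v₁ − u₂v₂`. -/
noncomputable def pseudoIsoGramDet (X : ℝ → ℝ → ℝ × ℝ × ℝ) (u t : ℝ) : ℝ :=
  let Xu := deriv (fun u' => X u' t) u
  let Xt := deriv (fun t' => X u t') t
  (Xu.1 ^ 2 - Xu.2.1 ^ 2) * (Xt.1 ^ 2 - Xt.2.1 ^ 2)
    - (Xu.1 * Xt.1 - Xu.2.1 * Xt.2.1) ^ 2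

/-- First fundamental form determinant of pseudo-isotropic helicoidal
surfaces of ni-type and i-type. -/
theorem pseudoIsotropic_helicoidal_gramDet
    (φ c : ℝ) (hφ : φ ≠ 0) (I : Set ℝ) (x y z : ℝ → ℝ)
    (hx : ∀ u ∈ I, DifferentiableAt ℝ x u)
    (hy : ∀ u ∈ I, DifferentiableAt ℝ y u)
    (hz : ∀ u ∈ I, DifferentiableAt ℝ z u) :
    ∀ u ∈ I, ∀ t : ℝ,
      (pseudoIsoGramDet (fun u' t' =>
          (x u' * Real.cosh (t' * φ) + y u' * Real.sinh (t' * φ),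
           x u' * Real.sinh (t' * φ) + y u' * Real.cosh (t' * φ),
           c * t')) u t
        = -(φ ^ 2) * (x u * deriv x u - y u * deriv y u) ^ 2) ∧
      (pseudoIsoGramDet (fun u' t' =>
          (x u' * Real.cosh (t' * φ), x u' * Real.sinh (t' * φ), z u' + c * t')) u t
        = -(φ ^ 2) * (x u * deriv x u) ^ 2) := by
  intro u hu t
  have hxd := (hx u hu).hasDerivAt
  have hyd := (hy u hu).hasDerivAt
  have hzd := (hz u hu).hasDerivAt
  set x' := deriv x u
  set y' := deriv y u
  set C := Real.cosh (t * φ) with hCdef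
  set S := Real.sinh (t * φ) with hSdef
  have hid : HasDerivAt (fun t' : ℝ => t' * φ) φ t := by
    simpa using (hasDerivAt_id t).mul_const φ
  have hC : HasDerivAt (fun t' => Real.cosh (t' * φ)) (S * φ) t :=
    by have := (Real.hasDerivAt_cosh (t * φ)).comp t hid; exact this
  have hS : HasDerivAt (fun t' => Real.sinh (t' * φ)) (C * φ) t :=
    by have := (Real.hasDerivAt_sinh (t * φ)).comp t hid; exact this
  have hct : HasDerivAt (fun t' : ℝ => c * t') c t := by
    simpa using (hasDerivAt_id t).const_mul c
  have hCS : C ^ 2 - S ^ 2 = 1 := by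
    have := Real.cosh_sq_sub_sinh_sq (t * φ)
    rw [hCdef, hSdef]; nlinarith [this]
  constructor
  · -- ni-type
    have hXu : HasDerivAt (fun u' =>
        ((x u' * C + y u' * S, x u' * S + y u' * C, c * t) : ℝ × ℝ × ℝ))
        ((x' * C + y' * S, x' * S + y' * C, 0)) u :=
      ((hxd.mul_const C).add (hyd.mul_const S)).prodMk
        (((hxd.mul_const S).add (hyd.mul_const C)).prodMk (hasDerivAt_const u (c * t)))
    have hXt : HasDerivAt (fun t' =>
        ((x u * Real.cosh (t' * φ) + y u * Real.sinh (t' * φ),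
          x u * Real.sinh (t' * φ) + y u * Real.cosh (t' * φ), c * t') : ℝ × ℝ × ℝ))
        ((x u * (S * φ) + y u * (C * φ), x u * (C * φ) + y u * (S * φ), c)) t :=
      ((hC.const_mul (x u)).add (hS.const_mul (y u))).prodMk
        (((hS.const_mul (x u)).add (hC.const_mul (y u))).prodMk hct)
    unfold pseudoIsoGramDet
    rw [hXu.deriv, hXt.deriv]
    simp only
    linear_combination (-(φ^2) * (x u * x' - y u * y')^2 * (C^2 - S^2 + 1)) * hCS
  · -- i-type
    have hXu : HasDerivAt (fun u' =>
        ((x u' * C, x u' * S, z u' + c * t) : ℝ × ℝ × ℝ))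
        ((x' * C, x' * S, deriv z u)) u :=
      (hxd.mul_const C).prodMk ((hxd.mul_const S).prodMk (by simpa using hzd.add_const (c * t)))
    have hXt : HasDerivAt (fun t' =>
        ((x u * Real.cosh (t' * φ), x u * Real.sinh (t' * φ), z u + c * t') : ℝ × ℝ × ℝ))
        ((x u * (S * φ), x u * (C * φ), c)) t :=
      (hC.const_mul (x u)).prodMk ((hS.const_mul (x u)).prodMk (by simpa using hct.const_add (z u)))
    unfold pseudoIsoGramDet
    rw [hXu.deriv, hXt.deriv]
    simp only
    linear_combination (-(φ^2) * (x u * x')^2 * (C^2 - S^2 + 1)) * hCS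
end

section
/- Let a, b, c, c₁, c₂ ∈ ℝ and let x, y, z : I → ℝ be differentiable on an interval I. For the pseudo-isotropic parabolic revolution surface of ni-type Yh₃(u,t) = (a t + x(u), b t + y(u), c t + (a c₁ + b c₂)t²/2 + c₁ t x(u) + c₂ t y(u)), the coefficients of the first fundamental form with respect to ⟨·,·⟩_pz satisfy g₁₁g₂₂ − g₁₂² = −(b x' − a y')². For the parabolic revolution surface of i-type Zh₃(u,t) = (a t + x(u), b t, c t + (a c₁ + b c₂)t²/2 + c₁ t x(u) + z(u)), one has g₁₁g₂₂ − g₁₂² = −b² x'². -/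
/-- First fundamental form determinant of pseudo-isotropic parabolic
revolution surfaces of ni-type and i-type. -/
theorem pseudoIsotropic_parabolicRevolution_gramDet
    (a b c c₁ c₂ : ℝ) (I : Set ℝ) (x y z : ℝ → ℝ)
    (hx : ∀ u ∈ I, DifferentiableAt ℝ x u)
    (hy : ∀ u ∈ I, DifferentiableAt ℝ y u)
    (hz : ∀ u ∈ I, DifferentiableAt ℝ z u) :
    ∀ u ∈ I, ∀ t : ℝ,
      (pseudoIsoGramDet (fun u' t' =>
          (a * t' + x u', b * t' + y u',
           c * t' + (a * c₁ + b * c₂) * t' ^ 2 / 2 + c₁ * t' * x u' + c₂ * t' * y u')) u t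
        = -((b * deriv x u - a * deriv y u) ^ 2)) ∧
      (pseudoIsoGramDet (fun u' t' =>
          (a * t' + x u', b * t',
           c * t' + (a * c₁ + b * c₂) * t' ^ 2 / 2 + c₁ * t' * x u' + z u')) u t
        = -(b ^ 2 * (deriv x u) ^ 2)) := by
  intro u hu t
  have hxd := (hx u hu).hasDerivAt
  have hyd := (hy u hu).hasDerivAt
  have hzd := (hz u hu).hasDerivAt
  constructor
  · have hU : HasDerivAt (fun u' =>
        (a * t + x u', b * t + y u',
         c * t + (a * c₁ + b * c₂) * t ^ 2 / 2 + c₁ * t * x u' + c₂ * t * y u'))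
        (deriv x u, deriv y u, c₁ * t * deriv x u + c₂ * t * deriv y u) u := by
      refine HasDerivAt.prodMk ?_ (HasDerivAt.prodMk ?_ ?_)
      · simpa using hxd.const_add (a * t)
      · simpa using hyd.const_add (b * t)
      · have := ((hxd.const_mul (c₁ * t)).add (hyd.const_mul (c₂ * t))).const_add
          (c * t + (a * c₁ + b * c₂) * t ^ 2 / 2)
        simp only [Pi.add_def] at this
        convert this using 2 <;> ring
    have hT : HasDerivAt (fun t' =>
        (a * t' + x u, b * t' + y u,
         c * t' + (a * c₁ + b * c₂) * t' ^ 2 / 2 + c₁ * t' * x u + c₂ * t' * y u))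
        (a, b, c + (a * c₁ + b * c₂) * t + c₁ * x u + c₂ * y u) t := by
      refine HasDerivAt.prodMk ?_ (HasDerivAt.prodMk ?_ ?_)
      · simpa using ((hasDerivAt_id t).const_mul a).add_const (x u)
      · simpa using ((hasDerivAt_id t).const_mul b).add_const (y u)
      · have h1 : HasDerivAt (fun t' : ℝ => c * t') c t := by
          simpa using (hasDerivAt_id t).const_mul c
        have h2 : HasDerivAt (fun t' : ℝ => (a * c₁ + b * c₂) * t' ^ 2 / 2)
            ((a * c₁ + b * c₂) * t) t := by
          have := ((hasDerivAt_pow 2 t).const_mul (a * c₁ + b * c₂)).div_const 2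
          refine this.congr_deriv ?_; norm_num; ring
        have h3 : HasDerivAt (fun t' : ℝ => c₁ * t' * x u) (c₁ * x u) t := by
          have := ((hasDerivAt_id t).const_mul c₁).mul_const (x u)
          simpa using this
        have h4 : HasDerivAt (fun t' : ℝ => c₂ * t' * y u) (c₂ * y u) t := by
          have := ((hasDerivAt_id t).const_mul c₂).mul_const (y u)
          simpa using this
        exact ((h1.add h2).add h3).add h4
    simp only [pseudoIsoGramDet, hU.deriv, hT.deriv]
    ring
  · have hU : HasDerivAt (fun u' =>
        (a * t + x u', b * t,
         c * t + (a * c₁ + b * c₂) * t ^ 2 / 2 + c₁ * t * x u' + z u'))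
        (deriv x u, 0, c₁ * t * deriv x u + deriv z u) u := by
      refine HasDerivAt.prodMk ?_ (HasDerivAt.prodMk ?_ ?_)
      · simpa using hxd.const_add (a * t)
      · exact hasDerivAt_const u (b * t)
      · have := ((hxd.const_mul (c₁ * t)).add hzd).const_add
          (c * t + (a * c₁ + b * c₂) * t ^ 2 / 2)
        simp only [Pi.add_def] at this
        convert this using 2 <;> ring
    have hT : HasDerivAt (fun t' =>
        (a * t' + x u, b * t',
         c * t' + (a * c₁ + b * c₂) * t' ^ 2 / 2 + c₁ * t' * x u + z u))
        (a, b, c + (a * c₁ + b * c₂) * t + c₁ * x u) t := by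
      refine HasDerivAt.prodMk ?_ (HasDerivAt.prodMk ?_ ?_)
      · simpa using ((hasDerivAt_id t).const_mul a).add_const (x u)
      · simpa using (hasDerivAt_id t).const_mul b
      · have h1 : HasDerivAt (fun t' : ℝ => c * t') c t := by
          simpa using (hasDerivAt_id t).const_mul c
        have h2 : HasDerivAt (fun t' : ℝ => (a * c₁ + b * c₂) * t' ^ 2 / 2)
            ((a * c₁ + b * c₂) * t) t := by
          have := ((hasDerivAt_pow 2 t).const_mul (a * c₁ + b * c₂)).div_const 2
          refine this.congr_deriv ?_; norm_num; ring
        have h3 : HasDerivAt (fun t' : ℝ => c₁ * t' * x u) (c₁ * x u) t := by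
          have := ((hasDerivAt_id t).const_mul c₁).mul_const (x u)
          simpa using this
        exact (((h1.add h2).add h3).add_const (z u))
    simp only [pseudoIsoGramDet, hU.deriv, hT.deriv]
    ring
end

section
/- Let φ ≠ 0, c ∈ ℝ and let x, y : I → ℝ be twice differentiable with x(u)x'(u) + y(u)y'(u) ≠ 0 on I. For the simply isotropic helicoidal surface of ni-type Y₂(u,t) = (x(u)cos(tφ) − y(u)sin(tφ), x(u)sin(tφ) + y(u)cos(tφ), c t), the isotropic Gaussian and mean curvatures satisfy, for all (u,t): K = (c²/φ²)·[(x'y − x y')(x''y' − x'y'') − (x'² + y'²)²]/(x x' + y y')⁴ and H = (c/φ)·[(x² + y²)(x''y' − x'y'') + (x'² + y'²)(x y' − x' y)]/(2 (x x' + y y')³). -/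
/-- Euclidean cross product on `ℝ × ℝ × ℝ`. -/
def cross3 (p q : ℝ × ℝ × ℝ) : ℝ × ℝ × ℝ :=
  (p.2.1 * q.2.2 - p.2.2 * q.2.1, p.2.2 * q.1 - p.1 * q.2.2, p.1 * q.2.1 - p.2.1 * q.1)

/-- Euclidean inner product on `ℝ × ℝ × ℝ`. -/
def dot3 (p q : ℝ × ℝ × ℝ) : ℝ :=
  p.1 * q.1 + p.2.1 * q.2.1 + p.2.2 * q.2.2

/-- Partial derivative of a parametrized surface in the first variable. -/
noncomputable def partialU (X : ℝ → ℝ → ℝ × ℝ × ℝ) (u t : ℝ) : ℝ × ℝ × ℝ :=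
  deriv (fun u' => X u' t) u

/-- Partial derivative of a parametrized surface in the second variable. -/
noncomputable def partialT (X : ℝ → ℝ → ℝ × ℝ × ℝ) (u t : ℝ) : ℝ × ℝ × ℝ :=
  deriv (fun t' => X u t') t

/-- The relative normal `N_h = (X_u × X_t) / (X_u × X_t)₃`, i.e. the Euclidean cross
product of the partial derivatives normalized to have third component `1`. -/
noncomputable def relNormal (X : ℝ → ℝ → ℝ × ℝ × ℝ) (u t : ℝ) : ℝ × ℝ × ℝ :=
  let n := cross3 (partialU X u t) (partialT X u t)
  (n.1 / n.2.2, n.2.1 / n.2.2, 1)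

/-- Second fundamental form coefficient `h₁₁ = ⟨N_h, X_uu⟩`. -/
noncomputable def h11 (X : ℝ → ℝ → ℝ × ℝ × ℝ) (u t : ℝ) : ℝ :=
  dot3 (relNormal X u t) (deriv (fun u' => partialU X u' t) u)

/-- Second fundamental form coefficient `h₁₂ = ⟨N_h, X_ut⟩`. -/
noncomputable def h12 (X : ℝ → ℝ → ℝ × ℝ × ℝ) (u t : ℝ) : ℝ :=
  dot3 (relNormal X u t) (deriv (fun t' => partialU X u t') t)

/-- Second fundamental form coefficient `h₂₂ = ⟨N_h, X_tt⟩`. -/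
noncomputable def h22 (X : ℝ → ℝ → ℝ × ℝ × ℝ) (u t : ℝ) : ℝ :=
  dot3 (relNormal X u t) (deriv (fun t' => partialT X u t') t)

/-- First fundamental form coefficient `g₁₁ = ⟨X_u, X_u⟩_z` for the simply isotropic
inner product `⟨u,v⟩_z = u₁v₁ + u₂v₂`. -/
noncomputable def g11 (X : ℝ → ℝ → ℝ × ℝ × ℝ) (u t : ℝ) : ℝ :=
  (partialU X u t).1 ^ 2 + (partialU X u t).2.1 ^ 2

/-- First fundamental form coefficient `g₁₂ = ⟨X_u, X_t⟩_z`. -/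
noncomputable def g12 (X : ℝ → ℝ → ℝ × ℝ × ℝ) (u t : ℝ) : ℝ :=
  (partialU X u t).1 * (partialT X u t).1 + (partialU X u t).2.1 * (partialT X u t).2.1

/-- First fundamental form coefficient `g₂₂ = ⟨X_t, X_t⟩_z`. -/
noncomputable def g22 (X : ℝ → ℝ → ℝ × ℝ × ℝ) (u t : ℝ) : ℝ :=
  (partialT X u t).1 ^ 2 + (partialT X u t).2.1 ^ 2

/-- The isotropic Gaussian curvature `K = (h₁₁h₂₂ − h₁₂²)/(g₁₁g₂₂ − g₁₂²)`. -/
noncomputable def Kiso (X : ℝ → ℝ → ℝ × ℝ × ℝ) (u t : ℝ) : ℝ :=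
  (h11 X u t * h22 X u t - h12 X u t ^ 2)
    / (g11 X u t * g22 X u t - g12 X u t ^ 2)

/-- The isotropic mean curvature
`H = (g₁₁h₂₂ − 2g₁₂h₁₂ + g₂₂h₁₁)/(2(g₁₁g₂₂ − g₁₂²))`. -/
noncomputable def Hiso (X : ℝ → ℝ → ℝ × ℝ × ℝ) (u t : ℝ) : ℝ :=
  (g11 X u t * h22 X u t - 2 * g12 X u t * h12 X u t + g22 X u t * h11 X u t)
    / (2 * (g11 X u t * g22 X u t - g12 X u t ^ 2))

/-- If `f` is differentiable at `u`, its derivative is differentiable at `u`, but `f`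
fails to be differentiable at points arbitrarily close to `u`, then (with Lean's
`deriv` junk-value convention) both `deriv f u` and `deriv (deriv f) u` vanish. -/
lemma bad_deriv {f : ℝ → ℝ} {u : ℝ} (hf : DifferentiableAt ℝ f u)
    (hf' : DifferentiableAt ℝ (deriv f) u)
    (hb : ∃ᶠ v in nhds u, ¬ DifferentiableAt ℝ f v) :
    deriv f u = 0 ∧ deriv (deriv f) u = 0 := by
  have hb' : ∃ᶠ v in nhdsWithin u {u}ᶜ, ¬ DifferentiableAt ℝ f v := by
    rw [frequently_nhdsWithin_iff]
    exact hb.mono (fun v hv =>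
      ⟨hv, fun h => hv (by rw [Set.mem_singleton_iff] at h; rw [h]; exact hf)⟩)
  have hfreq0 : ∃ᶠ v in nhdsWithin u {u}ᶜ, deriv f v = 0 :=
    hb'.mono fun v hv => deriv_zero_of_not_differentiableAt hv
  have hcont : Filter.Tendsto (deriv f) (nhdsWithin u {u}ᶜ) (nhds (deriv f u)) :=
    (hf'.continuousAt.tendsto).mono_left nhdsWithin_le_nhds
  have d1 : deriv f u = 0 :=
    tendsto_nhds_unique_of_frequently_eq hcont tendsto_const_nhds hfreq0
  have hs : Filter.Tendsto (slope (deriv f) u) (nhdsWithin u {u}ᶜ)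
      (nhds (deriv (deriv f) u)) :=
    hasDerivAt_iff_tendsto_slope.mp hf'.hasDerivAt
  have hfreq2 : ∃ᶠ v in nhdsWithin u {u}ᶜ, slope (deriv f) u v = 0 :=
    hfreq0.mono fun v hv => by simp [slope, hv, d1]
  exact ⟨d1, tendsto_nhds_unique_of_frequently_eq hs tendsto_const_nhds hfreq2⟩

/-- A dot product with a normalized normal, as a single fraction. -/
lemma dot3_div (n1 n2 d : ℝ) (D : ℝ × ℝ × ℝ) (hd : d ≠ 0) :
    dot3 (n1 / d, n2 / d, 1) D = (n1 * D.1 + n2 * D.2.1 + d * D.2.2) / d := by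
  simp only [dot3]
  field_simp

/-- Gaussian and mean curvature of the simply isotropic helicoidal
surface of ni-type
`Y₂(u,t) = (x cos(tφ) − y sin(tφ), x sin(tφ) + y cos(tφ), c t)`. -/
theorem simplyIsotropic_helicoidal_niType_curvatures
    (φ c : ℝ) (hφ : φ ≠ 0) (I : Set ℝ) (x y : ℝ → ℝ)
    (hx : ∀ u ∈ I, DifferentiableAt ℝ x u)
    (hx' : ∀ u ∈ I, DifferentiableAt ℝ (deriv x) u)
    (hy : ∀ u ∈ I, DifferentiableAt ℝ y u)
    (hy' : ∀ u ∈ I, DifferentiableAt ℝ (deriv y) u)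
    (hne : ∀ u ∈ I, x u * deriv x u + y u * deriv y u ≠ 0) :
    ∀ u ∈ I, ∀ t : ℝ,
      (Kiso (fun u' t' =>
          (x u' * Real.cos (t' * φ) - y u' * Real.sin (t' * φ),
           x u' * Real.sin (t' * φ) + y u' * Real.cos (t' * φ),
           c * t')) u t
        = c ^ 2 / φ ^ 2 *
            ((deriv x u * y u - x u * deriv y u) *
                (deriv (deriv x) u * deriv y u - deriv x u * deriv (deriv y) u)
              - ((deriv x u) ^ 2 + (deriv y u) ^ 2) ^ 2)
            / (x u * deriv x u + y u * deriv y u) ^ 4) ∧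
      (Hiso (fun u' t' =>
          (x u' * Real.cos (t' * φ) - y u' * Real.sin (t' * φ),
           x u' * Real.sin (t' * φ) + y u' * Real.cos (t' * φ),
           c * t')) u t
        = c / φ *
            ((x u ^ 2 + y u ^ 2) *
                (deriv (deriv x) u * deriv y u - deriv x u * deriv (deriv y) u)
              + ((deriv x u) ^ 2 + (deriv y u) ^ 2) *
                (x u * deriv y u - deriv x u * y u))
            / (2 * (x u * deriv x u + y u * deriv y u) ^ 3)) := by
  intro u hu t
  set X : ℝ → ℝ → ℝ × ℝ × ℝ := fun u' t' =>
      (x u' * Real.cos (t' * φ) - y u' * Real.sin (t' * φ),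
       x u' * Real.sin (t' * φ) + y u' * Real.cos (t' * φ),
       c * t') with hXdef
  have hxu := hx u hu
  have hyu := hy u hu
  have hxu' := hx' u hu
  have hyu' := hy' u hu
  have hS : x u * deriv x u + y u * deriv y u ≠ 0 := hne u hu
  have hab : Real.sin (t * φ) ^ 2 + Real.cos (t * φ) ^ 2 = 1 :=
    Real.sin_sq_add_cos_sq (t * φ)
  -- derivative of the u-slice at a point of twofold differentiability
  have hXu : ∀ v, DifferentiableAt ℝ x v → DifferentiableAt ℝ y v → ∀ s : ℝ,
      HasDerivAt (fun u' => X u' s)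
        (deriv x v * Real.cos (s * φ) - deriv y v * Real.sin (s * φ),
         deriv x v * Real.sin (s * φ) + deriv y v * Real.cos (s * φ), 0) v := by
    intro v hxv hyv s
    exact ((hxv.hasDerivAt.mul_const _).sub (hyv.hasDerivAt.mul_const _)).prodMk
      (((hxv.hasDerivAt.mul_const _).add (hyv.hasDerivAt.mul_const _)).prodMk
        (hasDerivAt_const v (c * s)))
  have hpU : ∀ v, DifferentiableAt ℝ x v → DifferentiableAt ℝ y v → ∀ s : ℝ,
      partialU X v s =
        (deriv x v * Real.cos (s * φ) - deriv y v * Real.sin (s * φ),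
         deriv x v * Real.sin (s * φ) + deriv y v * Real.cos (s * φ), 0) :=
    fun v hxv hyv s => (hXu v hxv hyv s).deriv
  -- derivative of the t-slice
  have hcos : ∀ s : ℝ, HasDerivAt (fun t' : ℝ => Real.cos (t' * φ))
      (-Real.sin (s * φ) * φ) s := fun s => (hasDerivAt_mul_const φ).cos
  have hsin : ∀ s : ℝ, HasDerivAt (fun t' : ℝ => Real.sin (t' * φ))
      (Real.cos (s * φ) * φ) s := fun s => (hasDerivAt_mul_const φ).sin
  have hct : ∀ s : ℝ, HasDerivAt (fun t' : ℝ => c * t') c s := by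
    intro s; simpa using (hasDerivAt_id s).const_mul c
  have hXt : ∀ s : ℝ, HasDerivAt (fun t' => X u t')
      (x u * (-Real.sin (s * φ) * φ) - y u * (Real.cos (s * φ) * φ),
       x u * (Real.cos (s * φ) * φ) + y u * (-Real.sin (s * φ) * φ), c) s := by
    intro s
    exact (((hcos s).const_mul (x u)).sub ((hsin s).const_mul (y u))).prodMk
      ((((hsin s).const_mul (x u)).add ((hcos s).const_mul (y u))).prodMk (hct s))
  have hpT : ∀ s : ℝ, partialT X u s =
      (x u * (-Real.sin (s * φ) * φ) - y u * (Real.cos (s * φ) * φ),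
       x u * (Real.cos (s * φ) * φ) + y u * (-Real.sin (s * φ) * φ), c) :=
    fun s => (hXt s).deriv
  -- the mixed and second t-derivatives
  have hpUt := hpU u hxu hyu t
  have hpTt := hpT t
  have hTT : deriv (fun s => partialT X u s) t =
      (x u * (-(Real.cos (t * φ) * φ) * φ) - y u * (-Real.sin (t * φ) * φ * φ),
       x u * (-Real.sin (t * φ) * φ * φ) + y u * (-(Real.cos (t * φ) * φ) * φ), 0) := by
    have he : (fun s => partialT X u s) = (fun s =>
        ((x u * (-Real.sin (s * φ) * φ) - y u * (Real.cos (s * φ) * φ),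
          x u * (Real.cos (s * φ) * φ) + y u * (-Real.sin (s * φ) * φ), c) : ℝ × ℝ × ℝ)) :=
      funext hpT
    rw [he]
    exact (((((hsin t).neg.mul_const φ).const_mul (x u)).sub
      (((hcos t).mul_const φ).const_mul (y u))).prodMk
      (((((hcos t).mul_const φ).const_mul (x u)).add
        (((hsin t).neg.mul_const φ).const_mul (y u))).prodMk (hasDerivAt_const t c))).deriv
  have hUT : deriv (fun s => partialU X u s) t =
      (deriv x u * (-Real.sin (t * φ) * φ) - deriv y u * (Real.cos (t * φ) * φ),
       deriv x u * (Real.cos (t * φ) * φ) + deriv y u * (-Real.sin (t * φ) * φ), 0) := by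
    have he : (fun s => partialU X u s) = (fun s =>
        ((deriv x u * Real.cos (s * φ) - deriv y u * Real.sin (s * φ),
          deriv x u * Real.sin (s * φ) + deriv y u * Real.cos (s * φ), 0) : ℝ × ℝ × ℝ)) :=
      funext (hpU u hxu hyu)
    rw [he]
    exact ((((hcos t).const_mul _).sub ((hsin t).const_mul _)).prodMk
      ((((hsin t).const_mul _).add ((hcos t).const_mul _)).prodMk
        (hasDerivAt_const t (0 : ℝ)))).deriv
  -- the normalized normal
  have hn3 : (deriv x u * Real.cos (t * φ) - deriv y u * Real.sin (t * φ)) *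
        (x u * (Real.cos (t * φ) * φ) + y u * (-Real.sin (t * φ) * φ)) -
        (deriv x u * Real.sin (t * φ) + deriv y u * Real.cos (t * φ)) *
        (x u * (-Real.sin (t * φ) * φ) - y u * (Real.cos (t * φ) * φ)) =
      φ * (x u * deriv x u + y u * deriv y u) := by
    linear_combination (φ * (x u * deriv x u + y u * deriv y u)) * hab
  have hφS : φ * (x u * deriv x u + y u * deriv y u) ≠ 0 := mul_ne_zero hφ hS
  have hN : relNormal X u t =
      ((deriv x u * Real.sin (t * φ) + deriv y u * Real.cos (t * φ)) * c /
          (φ * (x u * deriv x u + y u * deriv y u)),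
       -((deriv x u * Real.cos (t * φ) - deriv y u * Real.sin (t * φ)) * c) /
          (φ * (x u * deriv x u + y u * deriv y u)), 1) := by
    simp only [relNormal, cross3, hpUt, hpTt]
    rw [hn3]
    simp only [Prod.mk.injEq]
    refine ⟨by ring, by ring, trivial⟩
  -- h11, with case analysis on pathology near u
  have hH11 : h11 X u t =
      c * (deriv (deriv x) u * deriv y u - deriv x u * deriv (deriv y) u) /
        (φ * (x u * deriv x u + y u * deriv y u)) := by
    by_cases hgood : ∀ᶠ v in nhds u, DifferentiableAt ℝ x v ∧ DifferentiableAt ℝ y v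
    · have heq : (fun v => partialU X v t) =ᶠ[nhds u] (fun v =>
          ((deriv x v * Real.cos (t * φ) - deriv y v * Real.sin (t * φ),
            deriv x v * Real.sin (t * φ) + deriv y v * Real.cos (t * φ), 0) : ℝ × ℝ × ℝ)) :=
        hgood.mono fun v hv => hpU v hv.1 hv.2 t
      have hD : deriv (fun v => partialU X v t) u =
          (deriv (deriv x) u * Real.cos (t * φ) - deriv (deriv y) u * Real.sin (t * φ),
           deriv (deriv x) u * Real.sin (t * φ) + deriv (deriv y) u * Real.cos (t * φ), 0) := by
        rw [heq.deriv_eq]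
        exact (((hxu'.hasDerivAt.mul_const _).sub (hyu'.hasDerivAt.mul_const _)).prodMk
          (((hxu'.hasDerivAt.mul_const _).add (hyu'.hasDerivAt.mul_const _)).prodMk
            (hasDerivAt_const u (0 : ℝ)))).deriv
      simp only [h11]
      rw [hN, hD, dot3_div _ _ _ _ hφS]
      congr 1
      linear_combination
        (c * (deriv (deriv x) u * deriv y u - deriv x u * deriv (deriv y) u)) * hab
    · rw [Filter.not_eventually] at hgood
      have hrecover : ∀ v, DifferentiableAt ℝ (fun u' => X u' t) v →
          DifferentiableAt ℝ x v ∧ DifferentiableAt ℝ y v := by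
        intro v hd
        have h1 : DifferentiableAt ℝ (fun w => (X w t).1) v := hd.fst
        have h2 : DifferentiableAt ℝ (fun w => (X w t).2.1) v := hd.snd.fst
        have hxe : x = fun w =>
            Real.cos (t * φ) * (X w t).1 + Real.sin (t * φ) * (X w t).2.1 := by
          funext w
          simp only [hXdef]
          linear_combination (-(x w)) * hab
        have hye : y = fun w =>
            -Real.sin (t * φ) * (X w t).1 + Real.cos (t * φ) * (X w t).2.1 := by
          funext w
          simp only [hXdef]
          linear_combination (-(y w)) * hab
        exact ⟨by rw [hxe]; exact (h1.const_mul _).add (h2.const_mul _),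
               by rw [hye]; exact (h1.const_mul _).add (h2.const_mul _)⟩
      have hG0 : deriv (fun v => partialU X v t) u = 0 := by
        apply deriv_zero_of_not_differentiableAt
        intro hdiff
        have hfreq0 : ∃ᶠ v in nhdsWithin u {u}ᶜ, (fun v => partialU X v t) v = 0 := by
          rw [frequently_nhdsWithin_iff]
          refine hgood.mono fun v hv => ⟨?_, ?_⟩
          · exact deriv_zero_of_not_differentiableAt fun hd => hv (hrecover v hd)
          · intro h
            rw [Set.mem_singleton_iff] at h
            subst h
            exact hv ⟨hxu, hyu⟩
        have htd : Filter.Tendsto (fun v => partialU X v t) (nhdsWithin u {u}ᶜ)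
            (nhds (partialU X u t)) :=
          (hdiff.continuousAt.tendsto).mono_left nhdsWithin_le_nhds
        have h0 : partialU X u t = 0 :=
          tendsto_nhds_unique_of_frequently_eq htd tendsto_const_nhds hfreq0
        rw [hpUt] at h0
        have h1 : deriv x u * Real.cos (t * φ) - deriv y u * Real.sin (t * φ) = 0 := by
          have := congrArg Prod.fst h0
          simpa using this
        have h2 : deriv x u * Real.sin (t * φ) + deriv y u * Real.cos (t * φ) = 0 := by
          have := congrArg (fun p : ℝ × ℝ × ℝ => p.2.1) h0
          simpa using this
        apply hS
        have hx0 : deriv x u = 0 := by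
          linear_combination Real.cos (t * φ) * h1 + Real.sin (t * φ) * h2 -
            deriv x u * hab
        have hy0 : deriv y u = 0 := by
          linear_combination (-Real.sin (t * φ)) * h1 + Real.cos (t * φ) * h2 -
            deriv y u * hab
        rw [hx0, hy0]
        ring
      have hsplit : (∃ᶠ v in nhds u, ¬ DifferentiableAt ℝ x v) ∨
          (∃ᶠ v in nhds u, ¬ DifferentiableAt ℝ y v) := by
        rw [← Filter.frequently_or_distrib]
        exact hgood.mono fun v hv => not_and_or.mp hv
      rcases hsplit with hbx | hby
      · obtain ⟨d1, d2⟩ := bad_deriv hxu hxu' hbx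
        simp only [h11, hG0, hN, dot3, d1, d2]
        norm_num
      · obtain ⟨d1, d2⟩ := bad_deriv hyu hyu' hby
        simp only [h11, hG0, hN, dot3, d1, d2]
        norm_num
  -- remaining fundamental form coefficients
  have hg11 : g11 X u t = deriv x u ^ 2 + deriv y u ^ 2 := by
    simp only [g11, hpUt]
    linear_combination (deriv x u ^ 2 + deriv y u ^ 2) * hab
  have hg12 : g12 X u t = φ * (x u * deriv y u - y u * deriv x u) := by
    simp only [g12, hpUt, hpTt]
    linear_combination (φ * (x u * deriv y u - y u * deriv x u)) * hab
  have hg22 : g22 X u t = φ ^ 2 * (x u ^ 2 + y u ^ 2) := by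
    simp only [g22, hpTt]
    linear_combination (φ ^ 2 * (x u ^ 2 + y u ^ 2)) * hab
  have hh12 : h12 X u t = -(φ * c * (deriv x u ^ 2 + deriv y u ^ 2)) /
      (φ * (x u * deriv x u + y u * deriv y u)) := by
    simp only [h12]
    rw [hN, hUT, dot3_div _ _ _ _ hφS]
    congr 1
    linear_combination (-(φ * c * (deriv x u ^ 2 + deriv y u ^ 2))) * hab
  have hh22 : h22 X u t = -(φ ^ 2 * c * (x u * deriv y u - y u * deriv x u)) /
      (φ * (x u * deriv x u + y u * deriv y u)) := by
    simp only [h22]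
    rw [hN, hTT, dot3_div _ _ _ _ hφS]
    congr 1
    linear_combination (-(φ ^ 2 * c * (x u * deriv y u - y u * deriv x u))) * hab
  have hdet : (deriv x u ^ 2 + deriv y u ^ 2) * (φ ^ 2 * (x u ^ 2 + y u ^ 2)) -
      (φ * (x u * deriv y u - y u * deriv x u)) ^ 2 ≠ 0 := by
    have he : (deriv x u ^ 2 + deriv y u ^ 2) * (φ ^ 2 * (x u ^ 2 + y u ^ 2)) -
        (φ * (x u * deriv y u - y u * deriv x u)) ^ 2 =
        (φ * (x u * deriv x u + y u * deriv y u)) ^ 2 := by ring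
    rw [he]
    exact pow_ne_zero 2 hφS
  constructor
  · simp only [Kiso]
    rw [hH11, hh12, hh22, hg11, hg12, hg22]
    field_simp
    ring
  · simp only [Hiso]
    rw [hH11, hh12, hh22, hg11, hg12, hg22]
    field_simp
    ring
end

section
/- Let φ ≠ 0, c ∈ ℝ and let x, z : I → ℝ be twice differentiable with x(u) ≠ 0 and x'(u) ≠ 0 on I. For the simply isotropic helicoidal surface of i-type Z₂(u,t) = (x(u)cos(tφ), x(u)sin(tφ), z(u) + c t), the isotropic Gaussian and mean curvatures satisfy, for all (u,t): K = −z'(x''z' − x'z'')/(x x'⁴) − c²/(φ² x⁴) and H = [x'² z' − x (x''z' − x'z'')]/(2 x x'³). -/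
/-- Gaussian and mean curvature of the simply isotropic helicoidal
surface of i-type `Z₂(u,t) = (x cos(tφ), x sin(tφ), z + c t)`. -/
theorem simplyIsotropic_helicoidal_iType_curvatures
    (φ c : ℝ) (hφ : φ ≠ 0) (I : Set ℝ) (x z : ℝ → ℝ)
    (hx : ∀ u ∈ I, DifferentiableAt ℝ x u)
    (hx' : ∀ u ∈ I, DifferentiableAt ℝ (deriv x) u)
    (hz : ∀ u ∈ I, DifferentiableAt ℝ z u)
    (hz' : ∀ u ∈ I, DifferentiableAt ℝ (deriv z) u)
    (hx0 : ∀ u ∈ I, x u ≠ 0)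
    (hx'0 : ∀ u ∈ I, deriv x u ≠ 0) :
    ∀ u ∈ I, ∀ t : ℝ,
      (Kiso (fun u' t' =>
          (x u' * Real.cos (t' * φ), x u' * Real.sin (t' * φ), z u' + c * t')) u t
        = -(deriv z u *
              (deriv (deriv x) u * deriv z u - deriv x u * deriv (deriv z) u))
            / (x u * (deriv x u) ^ 4)
          - c ^ 2 / (φ ^ 2 * (x u) ^ 4)) ∧
      (Hiso (fun u' t' =>
          (x u' * Real.cos (t' * φ), x u' * Real.sin (t' * φ), z u' + c * t')) u t
        = ((deriv x u) ^ 2 * deriv z u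
            - x u * (deriv (deriv x) u * deriv z u - deriv x u * deriv (deriv z) u))
            / (2 * x u * (deriv x u) ^ 3)) := by
  intro u hu t
  have ha : DifferentiableAt ℝ x u := hx u hu
  have ha' : DifferentiableAt ℝ (deriv x) u := hx' u hu
  have hb : DifferentiableAt ℝ z u := hz u hu
  have hb' : DifferentiableAt ℝ (deriv z) u := hz' u hu
  have ha0 : x u ≠ 0 := hx0 u hu
  have ha'0 : deriv x u ≠ 0 := hx'0 u hu
  set X : ℝ → ℝ → ℝ × ℝ × ℝ := fun u' t' =>
    (x u' * Real.cos (t' * φ), x u' * Real.sin (t' * φ), z u' + c * t') with hXdef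
  have hpyth : Real.sin (t * φ) ^ 2 + Real.cos (t * φ) ^ 2 = 1 :=
    Real.sin_sq_add_cos_sq _
  -- first partial derivatives
  have hXu : ∀ t', partialU X u t' =
      (deriv x u * Real.cos (t' * φ), deriv x u * Real.sin (t' * φ), deriv z u) := by
    intro t'
    have h1 : HasDerivAt (fun s => x s * Real.cos (t' * φ)) (deriv x u * Real.cos (t' * φ)) u :=
      ha.hasDerivAt.mul_const _
    have h2 : HasDerivAt (fun s => x s * Real.sin (t' * φ)) (deriv x u * Real.sin (t' * φ)) u :=
      ha.hasDerivAt.mul_const _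
    have h3 : HasDerivAt (fun s => z s + c * t') (deriv z u) u := hb.hasDerivAt.add_const _
    exact (h1.prodMk (h2.prodMk h3)).deriv
  have hXt : ∀ t', partialT X u t' =
      (-(x u * φ) * Real.sin (t' * φ), x u * φ * Real.cos (t' * φ), c) := by
    intro t'
    have hlin : HasDerivAt (fun s : ℝ => s * φ) φ t' := by
      simpa using (hasDerivAt_id t').mul_const φ
    have h1 : HasDerivAt (fun s : ℝ => x u * Real.cos (s * φ))
        (-(x u * φ) * Real.sin (t' * φ)) t' := by
      have := hlin.cos.const_mul (x u)
      exact this.congr_deriv (by ring)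
    have h2 : HasDerivAt (fun s : ℝ => x u * Real.sin (s * φ))
        (x u * φ * Real.cos (t' * φ)) t' := by
      have := hlin.sin.const_mul (x u)
      exact this.congr_deriv (by ring)
    have h3 : HasDerivAt (fun s : ℝ => z u + c * s) c t' := by
      simpa using ((hasDerivAt_id t').const_mul c).const_add (z u)
    exact (h1.prodMk (h2.prodMk h3)).deriv
  -- second partial derivatives in t
  have hXut : deriv (fun t' => partialU X u t') t =
      (-(deriv x u * φ) * Real.sin (t * φ), deriv x u * φ * Real.cos (t * φ), 0) := by
    have hfe : (fun t' => partialU X u t') = fun t' =>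
        ((deriv x u * Real.cos (t' * φ), deriv x u * Real.sin (t' * φ), deriv z u) : ℝ × ℝ × ℝ) :=
      funext hXu
    rw [hfe]
    have hlin : HasDerivAt (fun s : ℝ => s * φ) φ t := by
      simpa using (hasDerivAt_id t).mul_const φ
    have h1 : HasDerivAt (fun s : ℝ => deriv x u * Real.cos (s * φ))
        (-(deriv x u * φ) * Real.sin (t * φ)) t := by
      have := hlin.cos.const_mul (deriv x u)
      exact this.congr_deriv (by ring)
    have h2 : HasDerivAt (fun s : ℝ => deriv x u * Real.sin (s * φ))
        (deriv x u * φ * Real.cos (t * φ)) t := by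
      have := hlin.sin.const_mul (deriv x u)
      exact this.congr_deriv (by ring)
    have h3 : HasDerivAt (fun _ : ℝ => deriv z u) 0 t := hasDerivAt_const _ _
    exact (h1.prodMk (h2.prodMk h3)).deriv
  have hXtt : deriv (fun t' => partialT X u t') t =
      (-(x u * φ ^ 2) * Real.cos (t * φ), -(x u * φ ^ 2) * Real.sin (t * φ), 0) := by
    have hfe : (fun t' => partialT X u t') = fun t' =>
        ((-(x u * φ) * Real.sin (t' * φ), x u * φ * Real.cos (t' * φ), c) : ℝ × ℝ × ℝ) :=
      funext hXt
    rw [hfe]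
    have hlin : HasDerivAt (fun s : ℝ => s * φ) φ t := by
      simpa using (hasDerivAt_id t).mul_const φ
    have h1 : HasDerivAt (fun s : ℝ => -(x u * φ) * Real.sin (s * φ))
        (-(x u * φ ^ 2) * Real.cos (t * φ)) t := by
      have := hlin.sin.const_mul (-(x u * φ))
      exact this.congr_deriv (by ring)
    have h2 : HasDerivAt (fun s : ℝ => x u * φ * Real.cos (s * φ))
        (-(x u * φ ^ 2) * Real.sin (t * φ)) t := by
      have := hlin.cos.const_mul (x u * φ)
      exact this.congr_deriv (by ring)
    have h3 : HasDerivAt (fun _ : ℝ => c) 0 t := hasDerivAt_const _ _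
    exact (h1.prodMk (h2.prodMk h3)).deriv
  -- second partial derivative in u (with degenerate fallback case)
  have hXuu : (deriv (fun u' => partialU X u' t) u =
        (deriv (deriv x) u * Real.cos (t * φ), deriv (deriv x) u * Real.sin (t * φ),
          deriv (deriv z) u))
      ∨ (deriv (fun u' => partialU X u' t) u = 0 ∧ deriv z u = 0 ∧ deriv (deriv z) u = 0) := by
    by_cases hA : ∀ᶠ u' in nhds u, DifferentiableAt ℝ z u'
    · left
      have hxev : ∀ᶠ u' in nhds u, DifferentiableAt ℝ x u' := by
        have : ∀ᶠ u' in nhds u, deriv x u' ≠ 0 := ha'.continuousAt.eventually_ne ha'0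
        exact this.mono fun u' h => by
          by_contra hnd; exact h (deriv_zero_of_not_differentiableAt hnd)
      have heq : (fun u' => partialU X u' t) =ᶠ[nhds u] (fun u' =>
          ((deriv x u' * Real.cos (t * φ), deriv x u' * Real.sin (t * φ), deriv z u')
            : ℝ × ℝ × ℝ)) := by
        filter_upwards [hxev, hA] with u' hdx hdz
        have h1 : HasDerivAt (fun s => x s * Real.cos (t * φ))
            (deriv x u' * Real.cos (t * φ)) u' := hdx.hasDerivAt.mul_const _
        have h2 : HasDerivAt (fun s => x s * Real.sin (t * φ))
            (deriv x u' * Real.sin (t * φ)) u' := hdx.hasDerivAt.mul_const _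
        have h3 : HasDerivAt (fun s => z s + c * t) (deriv z u') u' :=
          hdz.hasDerivAt.add_const _
        exact (h1.prodMk (h2.prodMk h3)).deriv
      rw [heq.deriv_eq]
      have h1 : HasDerivAt (fun u' => deriv x u' * Real.cos (t * φ))
          (deriv (deriv x) u * Real.cos (t * φ)) u := ha'.hasDerivAt.mul_const _
      have h2 : HasDerivAt (fun u' => deriv x u' * Real.sin (t * φ))
          (deriv (deriv x) u * Real.sin (t * φ)) u := ha'.hasDerivAt.mul_const _
      have h3 : HasDerivAt (deriv z) (deriv (deriv z) u) u := hb'.hasDerivAt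
      exact (h1.prodMk (h2.prodMk h3)).deriv
    · right
      have hfreq : ∃ᶠ u' in nhds u, ¬ DifferentiableAt ℝ z u' := Filter.not_eventually.mp hA
      have hFzero : ∀ u', ¬ DifferentiableAt ℝ z u' → partialU X u' t = 0 := by
        intro u' hnd
        apply deriv_zero_of_not_differentiableAt
        intro hd
        exact hnd (by simpa [hXdef] using hd.snd.snd.add_const (-(c * t)))
      have hb'0 : deriv z u = 0 := by
        refine tendsto_nhds_unique_of_frequently_eq hb'.continuousAt tendsto_const_nhds
          (hfreq.mono fun u' h => deriv_zero_of_not_differentiableAt h)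
      have hb''0 : deriv (deriv z) u = 0 := by
        have hslope := hasDerivAt_iff_tendsto_slope.mp hb'.hasDerivAt
        refine tendsto_nhds_unique_of_frequently_eq hslope tendsto_const_nhds ?_
        have hfr2 : ∃ᶠ u' in nhdsWithin u {u}ᶜ, ¬ DifferentiableAt ℝ z u' := by
          rw [frequently_nhdsWithin_iff]
          exact hfreq.mono fun u' h => ⟨h, fun he => h (he ▸ hb)⟩
        refine hfr2.mono fun u' h => ?_
        simp [slope_def_field, deriv_zero_of_not_differentiableAt h, hb'0]
      have hFne : partialU X u t ≠ 0 := by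
        rw [hXu t]
        intro h
        simp only [Prod.ext_iff, Prod.fst_zero, Prod.snd_zero] at h
        obtain ⟨h1, h2, -⟩ := h
        have hc0 : Real.cos (t * φ) = 0 := by
          rcases mul_eq_zero.mp h1 with h' | h'
          · exact absurd h' ha'0
          · exact h'
        have hs0 : Real.sin (t * φ) = 0 := by
          rcases mul_eq_zero.mp h2 with h' | h'
          · exact absurd h' ha'0
          · exact h'
        rw [hs0, hc0] at hpyth
        norm_num at hpyth
      have hnd : ¬ DifferentiableAt ℝ (fun u' => partialU X u' t) u := by
        intro h
        have hc : Filter.Tendsto (fun u' => partialU X u' t) (nhds u)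
            (nhds (partialU X u t)) := h.continuousAt
        exact hFne (tendsto_nhds_unique_of_frequently_eq hc tendsto_const_nhds
          (hfreq.mono fun u' h' => hFzero u' h'))
      exact ⟨deriv_zero_of_not_differentiableAt hnd, hb'0, hb''0⟩
  -- fundamental form coefficients
  have hg11 : g11 X u t = (deriv x u) ^ 2 := by
    simp only [g11, hXu]
    linear_combination (deriv x u) ^ 2 * hpyth
  have hg12 : g12 X u t = 0 := by
    simp only [g12, hXu, hXt]
    ring
  have hg22 : g22 X u t = (x u) ^ 2 * φ ^ 2 := by
    simp only [g22, hXt]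
    linear_combination (x u) ^ 2 * φ ^ 2 * hpyth
  have hN : relNormal X u t =
      ((c * deriv x u * Real.sin (t * φ) - x u * φ * deriv z u * Real.cos (t * φ))
          / (x u * deriv x u * φ),
        (-(x u * φ * deriv z u * Real.sin (t * φ)) - c * deriv x u * Real.cos (t * φ))
          / (x u * deriv x u * φ), 1) := by
    have hcross : cross3 (partialU X u t) (partialT X u t) =
        (c * deriv x u * Real.sin (t * φ) - x u * φ * deriv z u * Real.cos (t * φ),
          -(x u * φ * deriv z u * Real.sin (t * φ)) - c * deriv x u * Real.cos (t * φ),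
          x u * deriv x u * φ) := by
      rw [hXu t, hXt t]
      simp only [cross3, Prod.mk.injEq]
      refine ⟨by ring, by ring, by linear_combination x u * deriv x u * φ * hpyth⟩
    simp only [relNormal, hcross]
  have hh12 : h12 X u t = -(c * deriv x u) / x u := by
    simp only [h12, hXut, hN, dot3]
    field_simp
    linear_combination (-(c * deriv x u)) * hpyth
  have hh22 : h22 X u t = x u * φ ^ 2 * deriv z u / deriv x u := by
    simp only [h22, hXtt, hN, dot3]
    field_simp
    linear_combination (φ ^ 2 * x u * deriv z u) * hpyth
  have hh11 : h11 X u t =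
      (deriv x u * deriv (deriv z) u - deriv (deriv x) u * deriv z u) / deriv x u := by
    rcases hXuu with h | ⟨h, hb'0, hb''0⟩
    · simp only [h11, h, hN, dot3]
      field_simp
      linear_combination (-(x u * φ * deriv (deriv x) u * deriv z u)) * hpyth
    · simp only [h11, h, hN, dot3, hb'0, hb''0]
      simp
  -- conclusion
  have hden : g11 X u t * g22 X u t - g12 X u t ^ 2 = deriv x u ^ 2 * (x u ^ 2 * φ ^ 2) := by
    rw [hg11, hg12, hg22]; ring
  constructor
  · simp only [Kiso, hh11, hh12, hh22, hden]
    field_simp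
    ring
  · simp only [Hiso, hh11, hh12, hh22, hg11, hg12, hg22]
    field_simp
    ring
end

section
/- Let a, b, c, c₁, c₂ ∈ ℝ with b ≠ 0, and let x, z : I → ℝ be twice differentiable with x'(u) ≠ 0 on I. For the simply isotropic parabolic revolution surface of i-type Z₃(u,t) = (a t + x(u), b t, c t + (a c₁ + b c₂)t²/2 + c₁ t x(u) + z(u)), the isotropic Gaussian and mean curvatures satisfy, for all (u,t): K = −(a c₁ + b c₂)(x''z' − x'z'')/(b² x'³) − c₁²/b² and H = (b c₂ − a c₁)/(2b²) − (a² + b²)(x''z' − x'z'')/(2 b² x'³). -/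
/-- Gaussian and mean curvature of the simply isotropic parabolic
revolution surface of i-type
`Z₃(u,t) = (a t + x, b t, c t + (a c₁ + b c₂)t²/2 + c₁ t x + z)`. -/
theorem simplyIsotropic_parabolicRevolution_iType_curvatures
    (a b c c₁ c₂ : ℝ) (hb : b ≠ 0) (I : Set ℝ) (x z : ℝ → ℝ)
    (hx : ∀ u ∈ I, DifferentiableAt ℝ x u)
    (hx' : ∀ u ∈ I, DifferentiableAt ℝ (deriv x) u)
    (hz : ∀ u ∈ I, DifferentiableAt ℝ z u)
    (hz' : ∀ u ∈ I, DifferentiableAt ℝ (deriv z) u)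
    (hx'0 : ∀ u ∈ I, deriv x u ≠ 0) :
    ∀ u ∈ I, ∀ t : ℝ,
      (Kiso (fun u' t' =>
          (a * t' + x u', b * t',
           c * t' + (a * c₁ + b * c₂) * t' ^ 2 / 2 + c₁ * t' * x u' + z u')) u t
        = -((a * c₁ + b * c₂) *
              (deriv (deriv x) u * deriv z u - deriv x u * deriv (deriv z) u))
            / (b ^ 2 * (deriv x u) ^ 3)
          - c₁ ^ 2 / b ^ 2) ∧
      (Hiso (fun u' t' =>
          (a * t' + x u', b * t',
           c * t' + (a * c₁ + b * c₂) * t' ^ 2 / 2 + c₁ * t' * x u' + z u')) u t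
        = (b * c₂ - a * c₁) / (2 * b ^ 2)
          - (a ^ 2 + b ^ 2) *
              (deriv (deriv x) u * deriv z u - deriv x u * deriv (deriv z) u)
              / (2 * b ^ 2 * (deriv x u) ^ 3)) := by
  intro u hu t
  set X : ℝ → ℝ → ℝ × ℝ × ℝ := fun u' t' =>
      (a * t' + x u', b * t',
       c * t' + (a * c₁ + b * c₂) * t' ^ 2 / 2 + c₁ * t' * x u' + z u') with hXdef
  have hxd := hx u hu
  have hx'd := hx' u hu
  have hzd := hz u hu
  have hz'd := hz' u hu
  have hx0 := hx'0 u hu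
  -- partialU at nice points
  have hXu : ∀ (t' v : ℝ), DifferentiableAt ℝ x v → DifferentiableAt ℝ z v →
      partialU X v t' = (deriv x v, 0, c₁ * t' * deriv x v + deriv z v) := by
    intro t' v hxv hzv
    have h1 : HasDerivAt (fun v' => a * t' + x v') (deriv x v) v :=
      (hxv.hasDerivAt).const_add _
    have h2 : HasDerivAt (fun _ : ℝ => b * t') 0 v := hasDerivAt_const _ _
    have h3 : HasDerivAt
        (fun v' => c * t' + (a * c₁ + b * c₂) * t' ^ 2 / 2 + c₁ * t' * x v' + z v')
        (c₁ * t' * deriv x v + deriv z v) v :=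
      ((hxv.hasDerivAt.const_mul (c₁ * t')).const_add
        (c * t' + (a * c₁ + b * c₂) * t' ^ 2 / 2)).add hzv.hasDerivAt
    exact (h1.prodMk (h2.prodMk h3)).deriv
  -- partialT everywhere
  have hXt : ∀ (v t₀ : ℝ),
      partialT X v t₀ = (a, b, c + (a * c₁ + b * c₂) * t₀ + c₁ * x v) := by
    intro v t₀
    have h1 : HasDerivAt (fun t' : ℝ => a * t' + x v) a t₀ := by
      simpa using ((hasDerivAt_id t₀).const_mul a).add_const (x v)
    have h2 : HasDerivAt (fun t' : ℝ => b * t') b t₀ := by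
      simpa using (hasDerivAt_id t₀).const_mul b
    have h3 : HasDerivAt
        (fun t' => c * t' + (a * c₁ + b * c₂) * t' ^ 2 / 2 + c₁ * t' * x v + z v)
        (c + (a * c₁ + b * c₂) * t₀ + c₁ * x v) t₀ := by
      have h3a : HasDerivAt (fun t' : ℝ => c * t') (c * 1) t₀ :=
        (hasDerivAt_id t₀).const_mul c
      have h3b : HasDerivAt (fun t' : ℝ => (a * c₁ + b * c₂) * t' ^ 2 / 2)
          ((a * c₁ + b * c₂) * (2 * t₀ ^ 1) / 2) t₀ :=
        ((hasDerivAt_pow 2 t₀).const_mul (a * c₁ + b * c₂)).div_const 2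
      have h3c : HasDerivAt (fun t' : ℝ => c₁ * t' * x v) (c₁ * 1 * x v) t₀ :=
        ((hasDerivAt_id t₀).const_mul c₁).mul_const (x v)
      have := ((h3a.add h3b).add h3c).add_const (z v)
      refine this.congr_deriv ?_
      ring
    exact (h1.prodMk (h2.prodMk h3)).deriv
  -- partialU at u, for all t'
  have hXuU : ∀ t' : ℝ, partialU X u t' = (deriv x u, 0, c₁ * t' * deriv x u + deriv z u) :=
    fun t' => hXu t' u hxd hzd
  -- X_ut
  have hXut : deriv (fun t' => partialU X u t') t = (0, 0, c₁ * deriv x u) := by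
    have hfun : (fun t' => partialU X u t')
        = fun t' => (deriv x u, (0 : ℝ), c₁ * t' * deriv x u + deriv z u) :=
      funext fun t' => hXuU t'
    rw [hfun]
    have h3 : HasDerivAt (fun t' : ℝ => c₁ * t' * deriv x u + deriv z u)
        (c₁ * deriv x u) t := by
      have := (((hasDerivAt_id t).const_mul c₁).mul_const (deriv x u)).add_const (deriv z u)
      refine this.congr_deriv ?_
      ring
    exact ((hasDerivAt_const t (deriv x u)).prodMk ((hasDerivAt_const t (0:ℝ)).prodMk h3)).deriv
  -- X_tt
  have hXtt : deriv (fun t' => partialT X u t') t = (0, 0, a * c₁ + b * c₂) := by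
    have hfun : (fun t' => partialT X u t')
        = fun t' => ((a : ℝ), (b : ℝ), c + (a * c₁ + b * c₂) * t' + c₁ * x u) :=
      funext fun t' => hXt u t'
    rw [hfun]
    have h3 : HasDerivAt (fun t' : ℝ => c + (a * c₁ + b * c₂) * t' + c₁ * x u)
        (a * c₁ + b * c₂) t := by
      have := ((((hasDerivAt_id t).const_mul (a * c₁ + b * c₂)).const_add c)).add_const (c₁ * x u)
      refine this.congr_deriv ?_
      ring
    exact ((hasDerivAt_const t a).prodMk ((hasDerivAt_const t b).prodMk h3)).deriv
  -- x is differentiable on a neighbourhood of u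
  have hxe : ∀ᶠ v in nhds u, DifferentiableAt ℝ x v := by
    have hc : ContinuousAt (deriv x) u := hx'd.continuousAt
    exact (hc.eventually_ne hx0).mono fun v hv => differentiableAt_of_deriv_ne_zero hv
  by_cases hcase : ∀ᶠ v in nhds u, DifferentiableAt ℝ z v
  · -- nice case
    have key : (fun v => (deriv x v, (0:ℝ), c₁ * t * deriv x v + deriv z v))
        =ᶠ[nhds u] (fun v => partialU X v t) :=
      (hxe.and hcase).mono fun v ⟨h1, h2⟩ => (hXu t v h1 h2).symm
    have hXuu : deriv (fun v => partialU X v t) u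
        = (deriv (deriv x) u, 0,
            c₁ * t * deriv (deriv x) u + deriv (deriv z) u) := by
      rw [← key.deriv_eq]
      exact ((hx'd.hasDerivAt.prodMk ((hasDerivAt_const u (0:ℝ)).prodMk
        ((hx'd.hasDerivAt.const_mul (c₁ * t)).add hz'd.hasDerivAt)))).deriv
    constructor
    · simp only [Kiso, h11, h12, h22, g11, g12, g22, relNormal, hXuu, hXut, hXtt,
        hXuU t, hXt u t, cross3, dot3, zero_mul, mul_zero, sub_zero, zero_sub, zero_add, add_zero, mul_one, one_mul]
      rw [show (deriv x u ^ 2 + (0:ℝ) ^ 2) * (a ^ 2 + b ^ 2) - (deriv x u * a) ^ 2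
            = deriv x u ^ 2 * b ^ 2 by ring]
      field_simp
      ring
    · simp only [Hiso, h11, h12, h22, g11, g12, g22, relNormal, hXuu, hXut, hXtt,
        hXuU t, hXt u t, cross3, dot3, zero_mul, mul_zero, sub_zero, zero_sub, zero_add, add_zero, mul_one, one_mul]
      rw [show (deriv x u ^ 2 + (0:ℝ) ^ 2) * (a ^ 2 + b ^ 2) - (deriv x u * a) ^ 2
            = deriv x u ^ 2 * b ^ 2 by ring]
      field_simp
      ring
  · -- pathological case
    have hfreq : ∃ᶠ v in nhds u, ¬ DifferentiableAt ℝ z v := by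
      rwa [Filter.not_eventually] at hcase
    have hz'0 : deriv z u = 0 := by
      have hc : ContinuousAt (deriv z) u := hz'd.continuousAt
      have h0 : ∃ᶠ v in nhds u, deriv z v ∈ ({0} : Set ℝ) :=
        hfreq.mono fun v hv => deriv_zero_of_not_differentiableAt hv
      have := mem_closure_of_frequently_of_tendsto h0 hc.tendsto
      simpa using this
    have hz''0 : deriv (deriv z) u = 0 := by
      have hd : HasDerivAt (deriv z) (deriv (deriv z) u) u := hz'd.hasDerivAt
      rw [hasDerivAt_iff_tendsto_slope] at hd
      have hfreq' : ∃ᶠ v in nhdsWithin u {u}ᶜ, slope (deriv z) u v ∈ ({0} : Set ℝ) := by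
        rw [frequently_nhdsWithin_iff]
        refine hfreq.mono fun v hv => ?_
        have hvne : v ≠ u := fun h => hv (h ▸ hzd)
        refine ⟨?_, hvne⟩
        simp [slope_def_field, deriv_zero_of_not_differentiableAt hv, hz'0]
      have := mem_closure_of_frequently_of_tendsto hfreq' hd
      simpa using this
    have hXuu : deriv (fun v => partialU X v t) u = 0 := by
      apply deriv_zero_of_not_differentiableAt
      intro hdiff
      have hcont : ContinuousAt (fun v => partialU X v t) u := hdiff.continuousAt
      have h0 : ∃ᶠ v in nhds u, partialU X v t ∈ ({0} : Set (ℝ × ℝ × ℝ)) := by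
        refine (hfreq.and_eventually hxe).mono fun v ⟨hv, hxv⟩ => ?_
        have : ¬ DifferentiableAt ℝ (fun v' => X v' t) v := by
          intro hd
          apply hv
          have h3 : DifferentiableAt ℝ (fun v' => (X v' t).2.2) v := hd.snd.snd
          have hzz : z = fun v' => (X v' t).2.2
              - (c * t + (a * c₁ + b * c₂) * t ^ 2 / 2 + c₁ * t * x v') := by
            funext v'
            simp only [hXdef]
            ring
          rw [hzz]
          exact h3.sub ((hxv.const_mul (c₁ * t)).const_add _)
        simpa [partialU] using deriv_zero_of_not_differentiableAt this
      have hmem := mem_closure_of_frequently_of_tendsto h0 hcont.tendsto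
      rw [closure_singleton] at hmem
      have : partialU X u t = 0 := hmem
      rw [hXuU t] at this
      exact hx0 (congrArg Prod.fst this)
    constructor
    · simp only [Kiso, h11, h12, h22, g11, g12, g22, relNormal, hXuu, hXut, hXtt,
        hXuU t, hXt u t, cross3, dot3, hz'0, hz''0, Prod.fst_zero, Prod.snd_zero, zero_mul, mul_zero, sub_zero, zero_sub, zero_add, add_zero, mul_one, one_mul]
      rw [show (deriv x u ^ 2 + (0:ℝ) ^ 2) * (a ^ 2 + b ^ 2) - (deriv x u * a) ^ 2
            = deriv x u ^ 2 * b ^ 2 by ring]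
      field_simp
      ring
    · simp only [Hiso, h11, h12, h22, g11, g12, g22, relNormal, hXuu, hXut, hXtt,
        hXuU t, hXt u t, cross3, dot3, hz'0, hz''0, Prod.fst_zero, Prod.snd_zero, zero_mul, mul_zero, sub_zero, zero_sub, zero_add, add_zero, mul_one, one_mul]
      rw [show (deriv x u ^ 2 + (0:ℝ) ^ 2) * (a ^ 2 + b ^ 2) - (deriv x u * a) ^ 2
            = deriv x u ^ 2 * b ^ 2 by ring]
      field_simp
      ring
end
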